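/- Let (Ω, μ) be a measure space and A ⊆ Ω measurable with μ(A) ≠ 0. Let p₁, p₂ : Ω → [0,∞) be measurable, integrable, with p₁ + p₂ > 0 μ-a.e. on A. Let φ : [0,∞)² → [0,∞) be continuous, convex, strictly increasing in each coordinate, with φ(0,0)=0 and lim_{t→∞} φ(tz) = ∞ for nonzero z. Write S = ∫_A +̃_φ(p₁, p₂) dμ, P₁ = ∫_A p₁ dμ, P₂ = ∫_A p₂ dμ. Then φ(P₁/S, P₂/S) ≤ 1. -/

import Mathlib

open Filter Set MeasureTheory

/-- The Orlicz addition of two nonnegative numbers: the unique `λ > 0` with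
`φ(a/λ, b/λ) = 1` when `a + b > 0`, and `0` when `a = b = 0`. -/
noncomputable def orliczAdd (φ : ℝ → ℝ → ℝ) (a b : ℝ) : ℝ :=
  sInf {l : ℝ | 0 < l ∧ φ (a / l) (b / l) = 1}

theorem dual_functional_orlicz_brunn_minkowski_convex
    {Ω : Type*} [MeasurableSpace Ω] (μ : Measure Ω)
    (A : Set Ω) (hA : MeasurableSet A) (hA0 : μ A ≠ 0)
    (p₁ p₂ : Ω → ℝ) (hp₁m : Measurable p₁) (hp₂m : Measurable p₂)
    (hp₁0 : ∀ x, 0 ≤ p₁ x) (hp₂0 : ∀ x, 0 ≤ p₂ x)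
    (hp₁i : Integrable p₁ μ) (hp₂i : Integrable p₂ μ)
    (hpos : ∀ᵐ x ∂(μ.restrict A), 0 < p₁ x + p₂ x)
    (φ : ℝ → ℝ → ℝ)
    (hconv : ConvexOn ℝ (Set.Ici 0 ×ˢ Set.Ici 0) (fun z : ℝ × ℝ => φ z.1 z.2))
    (hc : ContinuousOn (fun z : ℝ × ℝ => φ z.1 z.2) (Set.Ici 0 ×ˢ Set.Ici 0))
    (hm1 : ∀ y : ℝ, 0 ≤ y → StrictMonoOn (fun x => φ x y) (Set.Ici 0))
    (hm2 : ∀ x : ℝ, 0 ≤ x → StrictMonoOn (fun y => φ x y) (Set.Ici 0))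
    (h0 : φ 0 0 = 0)
    (hlim : ∀ z₁ z₂ : ℝ, 0 ≤ z₁ → 0 ≤ z₂ → (z₁, z₂) ≠ (0, 0) →
      Tendsto (fun t => φ (t * z₁) (t * z₂)) atTop atTop) :
    φ ((∫ x in A, p₁ x ∂μ) / ∫ x in A, orliczAdd φ (p₁ x) (p₂ x) ∂μ)
      ((∫ x in A, p₂ x ∂μ) / ∫ x in A, orliczAdd φ (p₁ x) (p₂ x) ∂μ) ≤ 1 := by
  -- a globally continuous extension of φ
  set Φ : ℝ × ℝ → ℝ := fun z => φ (max z.1 0) (max z.2 0) with hΦdef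
  have hΦc : Continuous Φ := by
    have hcont : Continuous fun z : ℝ × ℝ => (max z.1 0, max z.2 0) := by fun_prop
    exact hc.comp_continuous hcont fun z => by
      exact ⟨mem_Ici.2 (le_max_right _ _), mem_Ici.2 (le_max_right _ _)⟩
  have hΦeq : ∀ a b : ℝ, 0 ≤ a → 0 ≤ b → Φ (a, b) = φ a b := by
    intro a b ha hb
    simp [hΦdef, max_eq_left ha, max_eq_left hb]
  -- weak monotonicity
  have hmono : ∀ a b a' b' : ℝ, 0 ≤ a → 0 ≤ b → a ≤ a' → b ≤ b' → φ a b ≤ φ a' b' := by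
    intro a b a' b' ha hb haa hbb
    have ha' : 0 ≤ a' := ha.trans haa
    have hb' : 0 ≤ b' := hb.trans hbb
    calc φ a b ≤ φ a' b := (hm1 b hb).monotoneOn (mem_Ici.2 ha) (mem_Ici.2 ha') haa
      _ ≤ φ a' b' := (hm2 a' ha').monotoneOn (mem_Ici.2 hb) (mem_Ici.2 hb') hbb
  -- strict monotonicity
  have hstrict : ∀ a b a' b' : ℝ, 0 ≤ a → 0 ≤ b → a ≤ a' → b ≤ b' →
      (a < a' ∨ b < b') → φ a b < φ a' b' := by
    intro a b a' b' ha hb haa hbb h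
    have ha' : 0 ≤ a' := ha.trans haa
    have hb' : 0 ≤ b' := hb.trans hbb
    rcases h with h | h
    · calc φ a b < φ a' b := hm1 b hb (mem_Ici.2 ha) (mem_Ici.2 ha') h
        _ ≤ φ a' b' := (hm2 a' ha').monotoneOn (mem_Ici.2 hb) (mem_Ici.2 hb') hbb
    · calc φ a b ≤ φ a' b := (hm1 b hb).monotoneOn (mem_Ici.2 ha) (mem_Ici.2 ha') haa
        _ < φ a' b' := hm2 a' ha' (mem_Ici.2 hb) (mem_Ici.2 hb') h
  -- a small point where φ ≤ 1
  obtain ⟨t₁, ht₁pos, ht₁⟩ : ∃ t₁ : ℝ, 0 < t₁ ∧ φ t₁ t₁ ≤ 1 := by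
    have hco : Continuous fun t : ℝ => Φ (t, t) := hΦc.comp (by fun_prop)
    have h00 : Φ 0 = 0 := by
      rw [show (0 : ℝ × ℝ) = ((0:ℝ), (0:ℝ)) from rfl, hΦeq 0 0 le_rfl le_rfl, h0]
    have hten : Tendsto (fun t : ℝ => Φ (t, t)) (nhds 0) (nhds 0) := by
      have := (hco.continuousAt (x := (0:ℝ)) : Tendsto _ _ _)
      simpa [ContinuousAt, hΦeq 0 0 le_rfl le_rfl, h0] using this
    have hev : ∀ᶠ t in nhds (0:ℝ), Φ (t, t) < 1 :=
      hten.eventually_lt_const (by norm_num)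
    have hev' : ∀ᶠ t in nhdsWithin (0:ℝ) (Ioi 0), Φ (t, t) < 1 ∧ t ∈ Ioi (0:ℝ) :=
      (hev.filter_mono nhdsWithin_le_nhds).and self_mem_nhdsWithin
    obtain ⟨t₁, h1, h2⟩ := hev'.exists
    exact ⟨t₁, h2, by rw [← hΦeq t₁ t₁ (le_of_lt h2) (le_of_lt h2)]; exact h1.le⟩
  -- strict antitonicity in the scaling parameter
  have hanti : ∀ a b : ℝ, 0 ≤ a → 0 ≤ b → 0 < a + b → ∀ l l' : ℝ, 0 < l → l < l' →
      φ (a / l') (b / l') < φ (a / l) (b / l) := by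
    intro a b ha hb hab l l' hl hll'
    have hl' : 0 < l' := hl.trans hll'
    have h1 : a / l' ≤ a / l := div_le_div_of_nonneg_left ha hl hll'.le
    have h2 : b / l' ≤ b / l := div_le_div_of_nonneg_left hb hl hll'.le
    refine hstrict _ _ _ _ (div_nonneg ha hl'.le) (div_nonneg hb hl'.le) h1 h2 ?_
    rcases (lt_or_ge 0 a) with hpa | hpa
    · exact Or.inl (div_lt_div_of_pos_left hpa hl hll')
    · have hpb : 0 < b := by linarith
      exact Or.inr (div_lt_div_of_pos_left hpb hl hll')
  -- the main pointwise facts about orliczAdd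
  have key : ∀ a b : ℝ, 0 ≤ a → 0 ≤ b → 0 < a + b →
      0 < orliczAdd φ a b ∧ φ (a / orliczAdd φ a b) (b / orliczAdd φ a b) = 1 ∧
        orliczAdd φ a b ≤ (a + b) / t₁ := by
    intro a b ha hb hab
    set c := (a + b) / t₁ with hc_def
    have hcpos : 0 < c := div_pos hab ht₁pos
    have hgc : φ (a / c) (b / c) ≤ 1 := by
      have h1 : a / c ≤ t₁ := by
        rw [hc_def, div_div_eq_mul_div, div_le_iff₀ hab]
        nlinarith
      have h2 : b / c ≤ t₁ := by
        rw [hc_def, div_div_eq_mul_div, div_le_iff₀ hab]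
        nlinarith
      exact (hmono _ _ _ _ (div_nonneg ha hcpos.le) (div_nonneg hb hcpos.le) h1 h2).trans ht₁
    obtain ⟨T, hT1, hTpos⟩ : ∃ T : ℝ, 1 ≤ φ (T * a) (T * b) ∧ 0 < T := by
      have hne : (a, b) ≠ ((0 : ℝ), (0 : ℝ)) := by
        intro h
        rw [Prod.mk.injEq] at h
        rw [h.1, h.2] at hab; norm_num at hab
      have h1 : ∀ᶠ t in atTop, 1 ≤ φ (t * a) (t * b) :=
        (hlim a b ha hb hne).eventually_ge_atTop 1
      obtain ⟨T, h⟩ := (h1.and (eventually_gt_atTop 0)).exists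
      exact ⟨T, h.1, h.2⟩
    set lo := T⁻¹ with hlo_def
    have hlopos : 0 < lo := inv_pos.2 hTpos
    have hglo : 1 ≤ φ (a / lo) (b / lo) := by
      have e1 : a / lo = T * a := by rw [hlo_def]; field_simp
      have e2 : b / lo = T * b := by rw [hlo_def]; field_simp
      rw [e1, e2]; exact hT1
    have hloc : lo ≤ c := by
      by_contra h
      push_neg at h
      have := hanti a b ha hb hab c lo hcpos h
      linarith
    have hgcont : ContinuousOn (fun l => φ (a / l) (b / l)) (Icc lo c) := by
      have heq : EqOn (fun l => φ (a / l) (b / l)) (fun l => Φ (a / l, b / l)) (Icc lo c) := by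
        intro l hl
        have hlp : 0 < l := lt_of_lt_of_le hlopos hl.1
        exact (hΦeq _ _ (div_nonneg ha hlp.le) (div_nonneg hb hlp.le)).symm
      refine ContinuousOn.congr ?_ heq
      apply hΦc.comp_continuousOn
      apply ContinuousOn.prodMk
      · exact continuousOn_const.div continuousOn_id fun l hl =>
          ne_of_gt (lt_of_lt_of_le hlopos hl.1)
      · exact continuousOn_const.div continuousOn_id fun l hl =>
          ne_of_gt (lt_of_lt_of_le hlopos hl.1)
    obtain ⟨l₀, hl₀mem, hl₀⟩ : ∃ l₀ ∈ Icc lo c, φ (a / l₀) (b / l₀) = 1 := by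
      have h1 : (1:ℝ) ∈ Icc (φ (a / c) (b / c)) (φ (a / lo) (b / lo)) := ⟨hgc, hglo⟩
      obtain ⟨l₀, hmem, heq⟩ := intermediate_value_Icc' hloc hgcont h1
      exact ⟨l₀, hmem, heq⟩
    have hl₀pos : 0 < l₀ := lt_of_lt_of_le hlopos hl₀mem.1
    have hset : {l : ℝ | 0 < l ∧ φ (a / l) (b / l) = 1} = {l₀} := by
      ext l
      simp only [mem_setOf_eq, mem_singleton_iff]
      constructor
      · rintro ⟨hl, hgl⟩
        by_contra hne
        rcases lt_or_gt_of_ne hne with h | h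
        · have := hanti a b ha hb hab l l₀ hl h
          rw [hgl, hl₀] at this; exact lt_irrefl _ this
        · have := hanti a b ha hb hab l₀ l hl₀pos h
          rw [hgl, hl₀] at this; exact lt_irrefl _ this
      · rintro rfl; exact ⟨hl₀pos, hl₀⟩
    have hS : orliczAdd φ a b = l₀ := by rw [orliczAdd, hset, csInf_singleton]
    rw [hS]
    exact ⟨hl₀pos, hl₀, hl₀mem.2⟩
  -- the degenerate case
  have hzero : ∀ a b : ℝ, 0 ≤ a → 0 ≤ b → a + b ≤ 0 → orliczAdd φ a b = 0 := by
    intro a b ha hb hab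
    have ha0 : a = 0 := le_antisymm (by linarith) ha
    have hb0 : b = 0 := le_antisymm (by linarith) hb
    subst ha0; subst hb0
    have hempty : {l : ℝ | 0 < l ∧ φ (0 / l) (0 / l) = 1} = ∅ := by
      ext l
      simp only [mem_setOf_eq, mem_empty_iff_false, iff_false, not_and, zero_div, h0]
      intro _; norm_num
    rw [orliczAdd, hempty, Real.sInf_empty]
  set S : Ω → ℝ := fun x => orliczAdd φ (p₁ x) (p₂ x) with hS_def
  have hSnn : ∀ x, 0 ≤ S x := by
    intro x
    rcases le_or_gt (p₁ x + p₂ x) 0 with h | h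
    · simp only [hS_def]; rw [hzero _ _ (hp₁0 x) (hp₂0 x) h]
    · exact (key _ _ (hp₁0 x) (hp₂0 x) h).1.le
  have hSle : ∀ x, S x ≤ (p₁ x + p₂ x) / t₁ := by
    intro x
    rcases le_or_gt (p₁ x + p₂ x) 0 with h | h
    · simp only [hS_def]; rw [hzero _ _ (hp₁0 x) (hp₂0 x) h]
      exact div_nonneg (add_nonneg (hp₁0 x) (hp₂0 x)) ht₁pos.le
    · exact (key _ _ (hp₁0 x) (hp₂0 x) h).2.2
  -- zero characterization
  have hSzero_iff : ∀ x, S x = 0 ↔ (p₁ x = 0 ∧ p₂ x = 0) := by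
    intro x
    constructor
    · intro h
      by_contra hn
      have hab : 0 < p₁ x + p₂ x := by
        rcases (hp₁0 x).lt_or_eq with h1 | h1
        · linarith [hp₂0 x]
        rcases (hp₂0 x).lt_or_eq with h2 | h2
        · linarith [hp₁0 x]
        exact absurd ⟨h1.symm, h2.symm⟩ hn
      exact absurd h (ne_of_gt (key _ _ (hp₁0 x) (hp₂0 x) hab).1)
    · rintro ⟨h1, h2⟩
      simp only [hS_def]; rw [hzero _ _ (hp₁0 x) (hp₂0 x) (by rw [h1, h2]; norm_num)]
  -- characterization of sublevel sets
  have hchar : ∀ c : ℝ, 0 < c → ∀ x : Ω, S x ≤ c ↔ Φ (p₁ x / c, p₂ x / c) ≤ 1 := by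
    intro c hcpos x
    rw [hΦeq _ _ (div_nonneg (hp₁0 x) hcpos.le) (div_nonneg (hp₂0 x) hcpos.le)]
    rcases le_or_gt (p₁ x + p₂ x) 0 with hab | hab
    · have ha : p₁ x = 0 := le_antisymm (by linarith [hp₂0 x]) (hp₁0 x)
      have hb : p₂ x = 0 := le_antisymm (by linarith [hp₁0 x]) (hp₂0 x)
      have h00 : S x = 0 := (hSzero_iff x).2 ⟨ha, hb⟩
      rw [h00, ha, hb]
      simp [zero_div, h0, hcpos.le]
    · obtain ⟨hSpos, hSeq, _⟩ := key _ _ (hp₁0 x) (hp₂0 x) hab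
      constructor
      · intro h
        rcases h.lt_or_eq with h | h
        · exact (hanti _ _ (hp₁0 x) (hp₂0 x) hab _ _ hSpos h).le.trans (le_of_eq hSeq)
        · rw [← h]; exact le_of_eq hSeq
      · intro h
        by_contra hlt
        push_neg at hlt
        have := hanti _ _ (hp₁0 x) (hp₂0 x) hab c (S x) hcpos hlt
        rw [hSeq] at this
        linarith
  -- measurability of S
  have hSmeas : Measurable S := by
    apply measurable_of_Iic
    intro c
    rcases lt_trichotomy c 0 with hc | hc | hc
    · have : S ⁻¹' Iic c = ∅ := by
        ext x
        simp only [mem_preimage, mem_Iic, mem_empty_iff_false, iff_false, not_le]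
        exact lt_of_lt_of_le hc (hSnn x)
      rw [this]; exact MeasurableSet.empty
    · subst hc
      have : S ⁻¹' Iic 0 = p₁ ⁻¹' {0} ∩ p₂ ⁻¹' {0} := by
        ext x
        simp only [mem_preimage, mem_Iic, mem_inter_iff, mem_singleton_iff]
        rw [← hSzero_iff x]
        constructor
        · intro h; exact le_antisymm h (hSnn x)
        · intro h; rw [h]
      rw [this]
      exact (hp₁m (measurableSet_singleton 0)).inter (hp₂m (measurableSet_singleton 0))
    · have : S ⁻¹' Iic c = (fun x => Φ (p₁ x / c, p₂ x / c)) ⁻¹' Iic 1 := by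
        ext x
        simp only [mem_preimage, mem_Iic]
        exact hchar c hc x
      rw [this]
      exact (hΦc.measurable.comp ((hp₁m.div_const c).prodMk (hp₂m.div_const c)))
        measurableSet_Iic
  -- integrability of S
  have hSint : Integrable S (μ.restrict A) := by
    have hbint : Integrable (fun x => (p₁ x + p₂ x) / t₁) (μ.restrict A) :=
      ((hp₁i.add hp₂i).div_const t₁).restrict
    refine hbint.mono' hSmeas.aestronglyMeasurable ?_
    filter_upwards with x
    rw [Real.norm_of_nonneg (hSnn x)]
    exact hSle x
  -- a.e. facts on A
  have hSae : ∀ᵐ x ∂(μ.restrict A), 0 < S x ∧ φ (p₁ x / S x) (p₂ x / S x) = 1 :=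
    hpos.mono fun x hx =>
      ⟨(key _ _ (hp₁0 x) (hp₂0 x) hx).1, (key _ _ (hp₁0 x) (hp₂0 x) hx).2.1⟩
  -- positivity of the total integral
  have hTpos : 0 < ∫ x in A, S x ∂μ := by
    rw [integral_pos_iff_support_of_nonneg_ae (Eventually.of_forall hSnn) hSint]
    rw [pos_iff_ne_zero]
    intro h
    have h1 : ∀ᵐ x ∂μ.restrict A, S x = 0 := by
      rw [ae_iff]
      simpa [Function.support] using h
    have h2 : ∀ᵐ x ∂μ.restrict A, False :=
      (h1.and hSae).mono fun x ⟨e, p, _⟩ => absurd e (ne_of_gt p)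
    rw [ae_iff] at h2
    simp only [not_false_eq_true, setOf_true] at h2
    rw [Measure.restrict_apply_univ] at h2
    exact hA0 h2
  -- the weighted measure
  have hdmeas : Measurable fun x => (S x).toNNReal := hSmeas.real_toNNReal
  set ν : Measure Ω :=
    (μ.restrict A).withDensity (fun x => ((S x).toNNReal : ENNReal)) with hν_def
  have hν_univ : ν univ = ENNReal.ofReal (∫ x in A, S x ∂μ) := by
    rw [hν_def, withDensity_apply _ MeasurableSet.univ, Measure.restrict_univ]
    rw [lintegral_coe_eq_integral _ (hSint.congr (Eventually.of_forall fun x =>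
      (Real.coe_toNNReal _ (hSnn x)).symm))]
    congr 1
    exact integral_congr_ae (Eventually.of_forall fun x => Real.coe_toNNReal _ (hSnn x))
  have : IsFiniteMeasure ν := ⟨by rw [hν_univ]; exact ENNReal.ofReal_lt_top⟩
  have : NeZero ν := by
    constructor
    intro h
    have := hν_univ
    rw [h] at this
    simp only [Measure.coe_zero, Pi.zero_apply] at this
    rw [eq_comm, ENNReal.ofReal_eq_zero] at this
    linarith
  -- the function to average
  set G : Ω → ℝ × ℝ := fun x => (p₁ x / S x, p₂ x / S x) with hG_def
  have hGsmul : ∀ x, (S x).toNNReal • G x = (p₁ x, p₂ x) := by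
    intro x
    rcases (hSnn x).lt_or_eq with h | h
    · have hne : S x ≠ 0 := ne_of_gt h
      rw [hG_def]
      simp only [NNReal.smul_def, Real.coe_toNNReal _ (hSnn x), Prod.smul_mk, smul_eq_mul]
      rw [mul_div_cancel₀ _ hne, mul_div_cancel₀ _ hne]
    · have h' : S x = 0 := h.symm
      obtain ⟨ha, hb⟩ := (hSzero_iff x).1 h'
      rw [hG_def]
      simp [h', ha, hb]; rfl
  have hGint : Integrable G ν := by
    rw [hν_def, integrable_withDensity_iff_integrable_smul hdmeas]
    exact (hp₁i.restrict.prodMk hp₂i.restrict).congr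
      (Eventually.of_forall fun x => (hGsmul x).symm)
  have hac : ν ≪ μ.restrict A := withDensity_absolutelyContinuous _ _
  have hφGae : (fun x => φ (G x).1 (G x).2) =ᵐ[ν] fun _ => (1:ℝ) := by
    have h := hSae.mono fun x hx => hx.2
    exact (hac.ae_le h : _)
  have hφGint : Integrable ((fun z : ℝ × ℝ => φ z.1 z.2) ∘ G) ν :=
    (integrable_const (1:ℝ)).congr hφGae.symm
  have hGmem : ∀ᵐ x ∂ν, G x ∈ Ici (0:ℝ) ×ˢ Ici (0:ℝ) :=
    Eventually.of_forall fun x =>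
      ⟨div_nonneg (hp₁0 x) (hSnn x), div_nonneg (hp₂0 x) (hSnn x)⟩
  have hjensen := hconv.map_average_le hc (isClosed_Ici.prod isClosed_Ici) hGmem hGint hφGint
  -- compute both sides
  have hR : ⨍ x, (fun z : ℝ × ℝ => φ z.1 z.2) (G x) ∂ν = 1 := by
    rw [average_congr hφGae, average_const]
  have hint1 : ∫ x, G x ∂ν = (∫ x in A, p₁ x ∂μ, ∫ x in A, p₂ x ∂μ) := by
    rw [hν_def, integral_withDensity_eq_integral_smul hdmeas]
    rw [show (fun x => (S x).toNNReal • G x) = fun x => (p₁ x, p₂ x) from funext hGsmul]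
    exact integral_pair hp₁i.restrict hp₂i.restrict
  have havg : ⨍ x, G x ∂ν =
      ((∫ x in A, p₁ x ∂μ) / ∫ x in A, S x ∂μ, (∫ x in A, p₂ x ∂μ) / ∫ x in A, S x ∂μ) := by
    rw [average_eq, hint1, measureReal_def, hν_univ, ENNReal.toReal_ofReal hTpos.le]
    rw [Prod.smul_mk, smul_eq_mul, smul_eq_mul, inv_mul_eq_div, inv_mul_eq_div]
  calc φ ((∫ x in A, p₁ x ∂μ) / ∫ x in A, S x ∂μ) ((∫ x in A, p₂ x ∂μ) / ∫ x in A, S x ∂μ)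
      = (fun z : ℝ × ℝ => φ z.1 z.2) (⨍ x, G x ∂ν) := by rw [havg]
    _ ≤ ⨍ x, (fun z : ℝ × ℝ => φ z.1 z.2) (G x) ∂ν := hjensen
    _ = 1 := hR
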